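/- Let F ⊆ ([n] choose 4) be an intersecting family with τ(F) ≥ 3 and n ≥ 9, such that |F ∩ [5]| ≥ 2 for all F ∈ F. Then for any disjoint 2-element subsets P, P' of [5], f_P + f_{P'} + f_{[5]\P} + f_{[5]\P'} ≤ 3(n−6), where f_S is the number of F ∈ F with F ∩ [5] = S. Moreover, equality holds only if {f_P, f_{P'}} = {0, 2n−13}. -/

import Mathlib

open Finset

/-- Pairs inside a fixed set `V`: at most `choose |V| 2`. -/
lemma sub_pairs_bound (V : Finset ℕ) (𝒜 : Finset (Finset ℕ))
    (h : ∀ T ∈ 𝒜, T ⊆ V ∧ T.card = 2) : 𝒜.card ≤ V.card.choose 2 := by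
  have hsub : 𝒜 ⊆ V.powersetCard 2 := by
    intro T hT
    rw [Finset.mem_powersetCard]
    exact h T hT
  calc 𝒜.card ≤ (V.powersetCard 2).card := Finset.card_le_card hsub
    _ = V.card.choose 2 := Finset.card_powersetCard 2 V

/-- Singletons inside `V`: at most `|V|`. -/
lemma singles_bound (V : Finset ℕ) (𝒜 : Finset (Finset ℕ))
    (h : ∀ T ∈ 𝒜, T ⊆ V ∧ T.card = 1) : 𝒜.card ≤ V.card := by
  have hsub : 𝒜 ⊆ V.powersetCard 1 := by
    intro T hT; rw [Finset.mem_powersetCard]; exact h T hT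
  calc 𝒜.card ≤ (V.powersetCard 1).card := Finset.card_le_card hsub
    _ = V.card.choose 1 := Finset.card_powersetCard 1 V
    _ = V.card := Nat.choose_one_right _

/-- Pairs in `G` all containing a fixed point `v`: at most `|G| - 1`. -/
lemma star_bound (G : Finset ℕ) (v : ℕ) (𝒜 : Finset (Finset ℕ))
    (h : ∀ T ∈ 𝒜, T ⊆ G ∧ T.card = 2 ∧ v ∈ T) : 𝒜.card ≤ G.card - 1 := by
  rcases 𝒜.eq_empty_or_nonempty with h0 | ⟨T0, hT0⟩
  · simp [h0]
  have hvG : v ∈ G := (h T0 hT0).1 (h T0 hT0).2.2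
  have key : 𝒜.card ≤ ((G.erase v).powersetCard 1).card := by
    apply Finset.card_le_card_of_injOn (fun T => T.erase v)
    · intro T hT
      obtain ⟨hTG, hTc, hvT⟩ := h T hT
      rw [Finset.mem_coe, Finset.mem_powersetCard]
      constructor
      · intro x hx
        rw [Finset.mem_erase] at hx ⊢
        exact ⟨hx.1, hTG hx.2⟩
      · rw [Finset.card_erase_of_mem hvT, hTc]
    · intro T hT T' hT' he
      simp only at he
      have h1 : insert v (T.erase v) = insert v (T'.erase v) := by rw [he]
      rwa [Finset.insert_erase (h T hT).2.2, Finset.insert_erase (h T' hT').2.2] at h1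
  calc 𝒜.card ≤ ((G.erase v).powersetCard 1).card := key
    _ = (G.erase v).card.choose 1 := Finset.card_powersetCard 1 _
    _ = (G.erase v).card := Nat.choose_one_right _
    _ = G.card - 1 := Finset.card_erase_of_mem hvG

/-- Pairs in `G` all meeting `{w1, w2}` with `w1 ∈ G`: at most `(|G|-1) + (|G|-2)`. -/
lemma cover2_bound (G : Finset ℕ) (w1 w2 : ℕ) (𝒜 : Finset (Finset ℕ)) (hw1 : w1 ∈ G)
    (h : ∀ T ∈ 𝒜, T ⊆ G ∧ T.card = 2 ∧ (w1 ∈ T ∨ w2 ∈ T)) :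
    𝒜.card ≤ (G.card - 1) + (G.card - 2) := by
  classical
  have hsplit := Finset.card_filter_add_card_filter_not (s := 𝒜) (fun T => w1 ∈ T)
  have h1 : (𝒜.filter (fun T => w1 ∈ T)).card ≤ G.card - 1 := by
    apply star_bound G w1
    intro T hT
    rw [Finset.mem_filter] at hT
    exact ⟨(h T hT.1).1, (h T hT.1).2.1, hT.2⟩
  have h2 : (𝒜.filter (fun T => ¬ w1 ∈ T)).card ≤ G.card - 2 := by
    have := star_bound (G.erase w1) w2 (𝒜.filter (fun T => ¬ w1 ∈ T)) ?_
    · calc _ ≤ (G.erase w1).card - 1 := this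
        _ = G.card - 1 - 1 := by rw [Finset.card_erase_of_mem hw1]
        _ = G.card - 2 := by omega
    · intro T hT
      rw [Finset.mem_filter] at hT
      obtain ⟨hTG, hTc, hor⟩ := h T hT.1
      refine ⟨?_, hTc, hor.resolve_left hT.2⟩
      intro x hx
      rw [Finset.mem_erase]
      exact ⟨fun hxw => hT.2 (hxw ▸ hx), hTG hx⟩
  omega

/-- Pairs meeting two fixed disjoint sets: at most `|T1| * |T2|`. -/
lemma transversal_bound (T1 T2 : Finset ℕ) (hd : T1 ∩ T2 = ∅) (ℬ : Finset (Finset ℕ))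
    (h : ∀ S ∈ ℬ, S.card = 2 ∧ (S ∩ T1).Nonempty ∧ (S ∩ T2).Nonempty) :
    ℬ.card ≤ T1.card * T2.card := by
  have hsub : ℬ ⊆ (T1 ×ˢ T2).image (fun p => ({p.1, p.2} : Finset ℕ)) := by
    intro S hS
    obtain ⟨hSc, ⟨x, hx⟩, ⟨y, hy⟩⟩ := h S hS
    rw [Finset.mem_inter] at hx hy
    have hxy : x ≠ y := by
      intro he
      have : x ∈ T1 ∩ T2 := Finset.mem_inter.mpr ⟨hx.2, he ▸ hy.2⟩
      simp [hd] at this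
    have hss : ({x, y} : Finset ℕ) ⊆ S := by
      intro z hz
      rcases Finset.mem_insert.mp hz with h' | h'
      · exact h' ▸ hx.1
      · exact (Finset.mem_singleton.mp h') ▸ hy.1
    have hcard : S.card ≤ ({x, y} : Finset ℕ).card := by
      rw [Finset.card_pair hxy, hSc]
    have : ({x, y} : Finset ℕ) = S := Finset.eq_of_subset_of_card_le hss hcard
    rw [Finset.mem_image]
    exact ⟨(x, y), Finset.mem_product.mpr ⟨hx.2, hy.2⟩, this⟩
  calc ℬ.card ≤ _ := Finset.card_le_card hsub
    _ ≤ (T1 ×ˢ T2).card := Finset.card_image_le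
    _ = T1.card * T2.card := Finset.card_product T1 T2

/-- In a 2-set containing `v` there is exactly one other element. -/
lemma pair_other {T : Finset ℕ} {v : ℕ} (hc : T.card = 2) (hv : v ∈ T) :
    ∃ x, x ≠ v ∧ T = {v, x} := by
  obtain ⟨a, b, hab, rfl⟩ := Finset.card_eq_two.mp hc
  rcases Finset.mem_insert.mp hv with rfl | hv'
  · exact ⟨b, fun h => hab h.symm, by simp⟩
  · rw [Finset.mem_singleton] at hv'
    subst hv'
    exact ⟨a, fun h => hab h, by rw [Finset.pair_comm]⟩


/-- A 2-set meeting three distinct pairs through `v` must contain `v`. -/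
lemma contain_of_meets {v x1 x2 x3 : ℕ} (h12 : x1 ≠ x2) (h13 : x1 ≠ x3) (h23 : x2 ≠ x3)
    {T : Finset ℕ} (hTc : T.card = 2)
    (m1 : (T ∩ ({v, x1} : Finset ℕ)).Nonempty) (m2 : (T ∩ ({v, x2} : Finset ℕ)).Nonempty)
    (m3 : (T ∩ ({v, x3} : Finset ℕ)).Nonempty) : v ∈ T := by
  by_contra hv
  have hx : ∀ x : ℕ, (T ∩ ({v, x} : Finset ℕ)).Nonempty → x ∈ T := by
    intro x ⟨z, hz⟩
    rw [Finset.mem_inter, Finset.mem_insert, Finset.mem_singleton] at hz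
    rcases hz.2 with rfl | rfl
    · exact absurd hz.1 hv
    · exact hz.1
  have hsub : ({x1, x2, x3} : Finset ℕ) ⊆ T := by
    intro z hz
    simp only [Finset.mem_insert, Finset.mem_singleton] at hz
    rcases hz with rfl | rfl | rfl
    exacts [hx _ m1, hx _ m2, hx _ m3]
  have h3 : ({x1, x2, x3} : Finset ℕ).card = 3 :=
    Finset.card_eq_three.mpr ⟨x1, x2, x3, h12, h13, h23, rfl⟩
  have := Finset.card_le_card hsub
  omega

/-- Structure of cross-intersecting pair families when `|𝒜| ≥ 3`. -/
lemma cross_bound (G : Finset ℕ) (𝒜 ℬ : Finset (Finset ℕ))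
    (h𝒜 : ∀ T ∈ 𝒜, T ⊆ G ∧ T.card = 2) (hℬ : ∀ S ∈ ℬ, S ⊆ G ∧ S.card = 2)
    (hcross : ∀ T ∈ 𝒜, ∀ S ∈ ℬ, (T ∩ S).Nonempty)
    (ha : 3 ≤ 𝒜.card) :
    ℬ.card ≤ 4 ∨ (ℬ.card ≤ G.card - 1 ∧ (ℬ.card ≤ 2 ∨ 𝒜.card ≤ G.card - 1)) := by
  classical
  -- get three distinct members of 𝒜
  obtain ⟨T1, hT1⟩ := Finset.card_pos.mp (by omega : 0 < 𝒜.card)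
  obtain ⟨T2, hT2'⟩ := Finset.card_pos.mp
    (by rw [Finset.card_erase_of_mem hT1]; omega : 0 < (𝒜.erase T1).card)
  obtain ⟨T3, hT3'⟩ := Finset.card_pos.mp
    (by rw [Finset.card_erase_of_mem hT2', Finset.card_erase_of_mem hT1]; omega :
      0 < ((𝒜.erase T1).erase T2).card)
  obtain ⟨h21, hT2⟩ := Finset.mem_erase.mp hT2'
  obtain ⟨h32, hT3''⟩ := Finset.mem_erase.mp hT3'
  obtain ⟨h31, hT3⟩ := Finset.mem_erase.mp hT3''
  -- if some two of them are disjoint, transversal bound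
  by_cases hd12 : T1 ∩ T2 = ∅
  · left
    have := transversal_bound T1 T2 hd12 ℬ (fun S hS => ⟨(hℬ S hS).2,
      by have := hcross T1 hT1 S hS; rwa [Finset.inter_comm] at this,
      by have := hcross T2 hT2 S hS; rwa [Finset.inter_comm] at this⟩)
    rw [(h𝒜 T1 hT1).2, (h𝒜 T2 hT2).2] at this
    omega
  by_cases hd13 : T1 ∩ T3 = ∅
  · left
    have := transversal_bound T1 T3 hd13 ℬ (fun S hS => ⟨(hℬ S hS).2,
      by have := hcross T1 hT1 S hS; rwa [Finset.inter_comm] at this,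
      by have := hcross T3 hT3 S hS; rwa [Finset.inter_comm] at this⟩)
    rw [(h𝒜 T1 hT1).2, (h𝒜 T3 hT3).2] at this
    omega
  by_cases hd23 : T2 ∩ T3 = ∅
  · left
    have := transversal_bound T2 T3 hd23 ℬ (fun S hS => ⟨(hℬ S hS).2,
      by have := hcross T2 hT2 S hS; rwa [Finset.inter_comm] at this,
      by have := hcross T3 hT3 S hS; rwa [Finset.inter_comm] at this⟩)
    rw [(h𝒜 T2 hT2).2, (h𝒜 T3 hT3).2] at this
    omega
  -- pairwise intersecting
  obtain ⟨v, hv⟩ := Finset.nonempty_iff_ne_empty.mpr hd12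
  rw [Finset.mem_inter] at hv
  obtain ⟨x1, hx1v, hT1e⟩ := pair_other (h𝒜 T1 hT1).2 hv.1
  obtain ⟨x2, hx2v, hT2e⟩ := pair_other (h𝒜 T2 hT2).2 hv.2
  have hx12 : x1 ≠ x2 := by
    intro h; exact h21 (by rw [hT2e, hT1e, h])
  by_cases hv3 : v ∈ T3
  · -- common point v
    obtain ⟨x3, hx3v, hT3e⟩ := pair_other (h𝒜 T3 hT3).2 hv3
    have hx13 : x1 ≠ x3 := fun h => h31 (by rw [hT3e, hT1e, h])
    have hx23 : x2 ≠ x3 := fun h => h32 (by rw [hT3e, hT2e, h])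
    have hBv : ∀ S ∈ ℬ, v ∈ S := by
      intro S hS
      apply contain_of_meets hx12 hx13 hx23 (hℬ S hS).2
      · have := hcross T1 hT1 S hS; rw [hT1e] at this; rwa [Finset.inter_comm]
      · have := hcross T2 hT2 S hS; rw [hT2e] at this; rwa [Finset.inter_comm]
      · have := hcross T3 hT3 S hS; rw [hT3e] at this; rwa [Finset.inter_comm]
    right
    constructor
    · exact star_bound G v ℬ (fun S hS => ⟨(hℬ S hS).1, (hℬ S hS).2, hBv S hS⟩)
    · by_cases hb : ℬ.card ≤ 2
      · exact Or.inl hb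
      right
      -- three distinct members of ℬ, all containing v
      obtain ⟨S1, hS1⟩ := Finset.card_pos.mp (by omega : 0 < ℬ.card)
      obtain ⟨S2, hS2'⟩ := Finset.card_pos.mp
        (by rw [Finset.card_erase_of_mem hS1]; omega : 0 < (ℬ.erase S1).card)
      obtain ⟨S3, hS3'⟩ := Finset.card_pos.mp
        (by rw [Finset.card_erase_of_mem hS2', Finset.card_erase_of_mem hS1]; omega :
          0 < ((ℬ.erase S1).erase S2).card)
      obtain ⟨g21, hS2⟩ := Finset.mem_erase.mp hS2'
      obtain ⟨g32, hS3''⟩ := Finset.mem_erase.mp hS3'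
      obtain ⟨g31, hS3⟩ := Finset.mem_erase.mp hS3''
      obtain ⟨y1, hy1v, hS1e⟩ := pair_other (hℬ S1 hS1).2 (hBv S1 hS1)
      obtain ⟨y2, hy2v, hS2e⟩ := pair_other (hℬ S2 hS2).2 (hBv S2 hS2)
      obtain ⟨y3, hy3v, hS3e⟩ := pair_other (hℬ S3 hS3).2 (hBv S3 hS3)
      have hy12 : y1 ≠ y2 := fun h => g21 (by rw [hS2e, hS1e, h])
      have hy13 : y1 ≠ y3 := fun h => g31 (by rw [hS3e, hS1e, h])
      have hy23 : y2 ≠ y3 := fun h => g32 (by rw [hS3e, hS2e, h])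
      apply star_bound G v 𝒜
      intro T hT
      refine ⟨(h𝒜 T hT).1, (h𝒜 T hT).2, ?_⟩
      apply contain_of_meets hy12 hy13 hy23 (h𝒜 T hT).2
      · have := hcross T hT S1 hS1; rwa [hS1e] at this
      · have := hcross T hT S2 hS2; rwa [hS2e] at this
      · have := hcross T hT S3 hS3; rwa [hS3e] at this
  · -- triangle: T3 = {x1, x2}
    left
    have hx1T3 : x1 ∈ T3 := by
      obtain ⟨z, hz⟩ := Finset.nonempty_iff_ne_empty.mpr hd13
      rw [Finset.mem_inter, hT1e, Finset.mem_insert, Finset.mem_singleton] at hz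
      rcases hz.1 with rfl | rfl
      · exact absurd hz.2 hv3
      · exact hz.2
    have hx2T3 : x2 ∈ T3 := by
      obtain ⟨z, hz⟩ := Finset.nonempty_iff_ne_empty.mpr hd23
      rw [Finset.mem_inter, hT2e, Finset.mem_insert, Finset.mem_singleton] at hz
      rcases hz.1 with rfl | rfl
      · exact absurd hz.2 hv3
      · exact hz.2
    have hT3e : T3 = {x1, x2} := by
      refine (Finset.eq_of_subset_of_card_le ?_ ?_).symm
      · intro z hz
        simp only [Finset.mem_insert, Finset.mem_singleton] at hz
        rcases hz with rfl | rfl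
        exacts [hx1T3, hx2T3]
      · rw [(h𝒜 T3 hT3).2, Finset.card_pair hx12]
    -- every S ∈ ℬ is a subset of {v, x1, x2}
    have hsub : ∀ S ∈ ℬ, S ⊆ ({v, x1, x2} : Finset ℕ) := by
      intro S hS z hz
      simp only [Finset.mem_insert, Finset.mem_singleton]
      by_contra hzn
      push_neg at hzn
      -- S = {z, w}; w must be in T1 ∩ T2 ∩ T3
      obtain ⟨w, hwz, hSe⟩ := pair_other (hℬ S hS).2 hz
      have hw : ∀ TT : Finset ℕ, (S ∩ TT).Nonempty → TT ⊆ ({v, x1, x2} : Finset ℕ) → w ∈ TT := by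
        intro TT ⟨u, hu⟩ hTTs
        rw [Finset.mem_inter, hSe, Finset.mem_insert, Finset.mem_singleton] at hu
        rcases hu.1 with rfl | rfl
        · have := hTTs hu.2
          simp only [Finset.mem_insert, Finset.mem_singleton] at this
          rcases this with h|h|h
          exacts [absurd h hzn.1, absurd h hzn.2.1, absurd h hzn.2.2]
        · exact hu.2
      have hsub1 : T1 ⊆ ({v, x1, x2} : Finset ℕ) := by
        rw [hT1e]; intro u hu
        simp only [Finset.mem_insert, Finset.mem_singleton] at hu ⊢; tauto
      have hsub2 : T2 ⊆ ({v, x1, x2} : Finset ℕ) := by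
        rw [hT2e]; intro u hu
        simp only [Finset.mem_insert, Finset.mem_singleton] at hu ⊢; tauto
      have hsub3 : T3 ⊆ ({v, x1, x2} : Finset ℕ) := by
        rw [hT3e]; intro u hu
        simp only [Finset.mem_insert, Finset.mem_singleton] at hu ⊢; tauto
      have hw1 := hw T1 (by have := hcross T1 hT1 S hS; rwa [Finset.inter_comm] at this) hsub1
      have hw2 := hw T2 (by have := hcross T2 hT2 S hS; rwa [Finset.inter_comm] at this) hsub2
      have hw3 := hw T3 (by have := hcross T3 hT3 S hS; rwa [Finset.inter_comm] at this) hsub3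
      -- w ∈ T1 ∩ T2 = {v}, but v ∉ T3
      rw [hT1e, Finset.mem_insert, Finset.mem_singleton] at hw1
      rw [hT2e, Finset.mem_insert, Finset.mem_singleton] at hw2
      rcases hw1 with rfl | rfl
      · exact hv3 hw3
      · rcases hw2 with rfl | rfl
        · exact hv3 hw3
        · exact hx12 rfl
    have := sub_pairs_bound ({v, x1, x2} : Finset ℕ) ℬ
      (fun S hS => ⟨hsub S hS, (hℬ S hS).2⟩)
    have hc3 : ({v, x1, x2} : Finset ℕ).card ≤ 3 := by
      apply le_trans (Finset.card_insert_le _ _)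
      have := Finset.card_insert_le x1 ({x2} : Finset ℕ)
      simp at this ⊢
      omega
    calc ℬ.card ≤ ({v, x1, x2} : Finset ℕ).card.choose 2 := this
      _ ≤ Nat.choose 3 2 := Nat.choose_le_choose 2 hc3
      _ ≤ 4 := by norm_num
/-- The outside ground set has `n - 5` elements. -/
lemma Gcard {n : ℕ} (hn : 9 ≤ n) :
    (Finset.Icc 1 n \ Finset.Icc 1 5).card = n - 5 := by
  rw [Finset.card_sdiff_of_subset (Finset.Icc_subset_Icc le_rfl (by omega))]
  simp [Nat.card_Icc]

/-- Packaging the family of "tails" of members with a given trace on `[5]`. -/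
lemma tail_family (n : ℕ) (F : Finset (Finset ℕ))
    (hFsub : ∀ A ∈ F, A ⊆ Finset.Icc 1 n ∧ A.card = 4)
    (S : Finset ℕ) :
    ∃ 𝒜 : Finset (Finset ℕ),
      𝒜.card = (F.filter (fun A => A ∩ Finset.Icc 1 5 = S)).card ∧
      (∀ T ∈ 𝒜, T ⊆ Finset.Icc 1 n \ Finset.Icc 1 5 ∧ T.card = 4 - S.card) ∧
      (∀ T ∈ 𝒜, ∃ A ∈ F, A ∩ Finset.Icc 1 5 = S ∧ A \ Finset.Icc 1 5 = T) := by
  classical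
  have hrec : ∀ s t : Finset ℕ, (s ∩ t) ∪ (s \ t) = s := by
    intro s t; ext a
    simp only [Finset.mem_union, Finset.mem_inter, Finset.mem_sdiff]
    tauto
  refine ⟨(F.filter (fun A => A ∩ Finset.Icc 1 5 = S)).image
      (fun A => A \ Finset.Icc 1 5), ?_, ?_, ?_⟩
  · apply Finset.card_image_of_injOn
    intro A hA A' hA' he
    rw [Finset.coe_filter, Set.mem_setOf_eq] at hA hA'
    simp only at he
    calc A = (A ∩ Finset.Icc 1 5) ∪ (A \ Finset.Icc 1 5) := (hrec _ _).symm
      _ = (A' ∩ Finset.Icc 1 5) ∪ (A' \ Finset.Icc 1 5) := by rw [hA.2, hA'.2, he]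
      _ = A' := hrec _ _
  · intro T hT
    rw [Finset.mem_image] at hT
    obtain ⟨A, hA, rfl⟩ := hT
    rw [Finset.mem_filter] at hA
    constructor
    · intro x hx
      rw [Finset.mem_sdiff] at hx ⊢
      exact ⟨(hFsub A hA.1).1 hx.1, hx.2⟩
    · have h1 : (A ∩ Finset.Icc 1 5).card + (A \ Finset.Icc 1 5).card = A.card :=
        Finset.card_inter_add_card_sdiff A (Finset.Icc 1 5)
      rw [hA.2, (hFsub A hA.1).2] at h1
      omega
  · intro T hT
    rw [Finset.mem_image] at hT
    obtain ⟨A, hA, rfl⟩ := hT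
    rw [Finset.mem_filter] at hA
    exact ⟨A, hA.1, hA.2, rfl⟩

/-- Tails of members with disjoint traces intersect. -/
lemma cross_tails (F : Finset (Finset ℕ))
    (hint : ∀ A ∈ F, ∀ A' ∈ F, (A ∩ A').Nonempty)
    (S1 S2 : Finset ℕ) (hd : S1 ∩ S2 = ∅)
    (A B : Finset ℕ) (hA : A ∈ F) (hB : B ∈ F)
    (trA : A ∩ Finset.Icc 1 5 = S1) (trB : B ∩ Finset.Icc 1 5 = S2) :
    ((A \ Finset.Icc 1 5) ∩ (B \ Finset.Icc 1 5)).Nonempty := by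
  obtain ⟨x, hx⟩ := hint A hA B hB
  rw [Finset.mem_inter] at hx
  by_cases hxU : x ∈ Finset.Icc 1 5
  · exfalso
    have h1 : x ∈ S1 := trA ▸ Finset.mem_inter.mpr ⟨hx.1, hxU⟩
    have h2 : x ∈ S2 := trB ▸ Finset.mem_inter.mpr ⟨hx.2, hxU⟩
    have : x ∈ S1 ∩ S2 := Finset.mem_inter.mpr ⟨h1, h2⟩
    simp [hd] at this
  · exact ⟨x, Finset.mem_inter.mpr ⟨Finset.mem_sdiff.mpr ⟨hx.1, hxU⟩,
      Finset.mem_sdiff.mpr ⟨hx.2, hxU⟩⟩⟩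
/-- F1: number of members with a fixed 3-element trace is at most `n - 5`. -/
lemma triple_bound (n : ℕ) (hn : 9 ≤ n) (F : Finset (Finset ℕ))
    (hFsub : ∀ A ∈ F, A ⊆ Finset.Icc 1 n ∧ A.card = 4)
    (S : Finset ℕ) (hScard : S.card = 3) :
    (F.filter (fun A => A ∩ Finset.Icc 1 5 = S)).card ≤ n - 5 := by
  obtain ⟨𝒜, hcard, hprops, -⟩ := tail_family n F hFsub S
  rw [← hcard]
  have := singles_bound (Finset.Icc 1 n \ Finset.Icc 1 5) 𝒜
    (fun T hT => ⟨(hprops T hT).1, by rw [(hprops T hT).2, hScard]⟩)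
  rwa [Gcard hn] at this

/-- F2: number of members with a fixed 2-element trace is at most `2n - 13`. -/
lemma pair_bound (n : ℕ) (hn : 9 ≤ n) (F : Finset (Finset ℕ))
    (hFsub : ∀ A ∈ F, A ⊆ Finset.Icc 1 n ∧ A.card = 4)
    (hint : ∀ A ∈ F, ∀ A' ∈ F, (A ∩ A').Nonempty)
    (hτ : ∀ S ⊆ Finset.Icc 1 n, S.card ≤ 2 → ∃ A ∈ F, S ∩ A = ∅)
    (hU2 : ∀ A ∈ F, 2 ≤ (A ∩ Finset.Icc 1 5).card)
    (P : Finset ℕ) (hP : P ⊆ Finset.Icc 1 5) (hPcard : P.card = 2) :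
    (F.filter (fun A => A ∩ Finset.Icc 1 5 = P)).card ≤ 2 * n - 13 := by
  obtain ⟨𝒜, hcard, hprops, hmem⟩ := tail_family n F hFsub P
  rw [← hcard]
  rcases 𝒜.eq_empty_or_nonempty with h0 | ⟨T0, hT0⟩
  · simp [h0]
  -- get a member M avoiding P
  obtain ⟨M, hMF, hMP⟩ := hτ P (hP.trans (Finset.Icc_subset_Icc le_rfl (by omega)))
    (by omega)
  have hWG : M \ Finset.Icc 1 5 ⊆ Finset.Icc 1 n \ Finset.Icc 1 5 := by
    intro x hx
    rw [Finset.mem_sdiff] at hx ⊢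
    exact ⟨(hFsub M hMF).1 hx.1, hx.2⟩
  have hWcard : (M \ Finset.Icc 1 5).card ≤ 2 := by
    have h1 := Finset.card_inter_add_card_sdiff M (Finset.Icc 1 5)
    have h2 := hU2 M hMF
    have h3 := (hFsub M hMF).2
    omega
  have hmeet : ∀ T ∈ 𝒜, (T ∩ (M \ Finset.Icc 1 5)).Nonempty := by
    intro T hT
    obtain ⟨A, hAF, htrA, rfl⟩ := hmem T hT
    obtain ⟨x, hx⟩ := hint A hAF M hMF
    rw [Finset.mem_inter] at hx
    by_cases hxU : x ∈ Finset.Icc 1 5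
    · exfalso
      have hxP : x ∈ P := htrA ▸ Finset.mem_inter.mpr ⟨hx.1, hxU⟩
      have : x ∈ P ∩ M := Finset.mem_inter.mpr ⟨hxP, hx.2⟩
      simp [hMP] at this
    · exact ⟨x, Finset.mem_inter.mpr ⟨Finset.mem_sdiff.mpr ⟨hx.1, hxU⟩,
        Finset.mem_sdiff.mpr ⟨hx.2, hxU⟩⟩⟩
  have hprops2 : ∀ T ∈ 𝒜, T ⊆ Finset.Icc 1 n \ Finset.Icc 1 5 ∧ T.card = 2 := by
    intro T hT
    exact ⟨(hprops T hT).1, by rw [(hprops T hT).2, hPcard]⟩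
  by_cases hW2 : (M \ Finset.Icc 1 5).card = 2
  · -- cover by two points
    obtain ⟨w1, w2, hw12, hWe⟩ := Finset.card_eq_two.mp hW2
    have hw1G : w1 ∈ Finset.Icc 1 n \ Finset.Icc 1 5 := hWG (by rw [hWe]; simp)
    have := cover2_bound (Finset.Icc 1 n \ Finset.Icc 1 5) w1 w2 𝒜 hw1G ?_
    · rw [Gcard hn] at this
      omega
    · intro T hT
      refine ⟨(hprops2 T hT).1, (hprops2 T hT).2, ?_⟩
      obtain ⟨z, hz⟩ := hmeet T hT
      rw [Finset.mem_inter, hWe, Finset.mem_insert, Finset.mem_singleton] at hz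
      rcases hz.2 with rfl | rfl
      · exact Or.inl hz.1
      · exact Or.inr hz.1
  · -- |W| ≤ 1 : all tails share the single point of W
    obtain ⟨u, hu⟩ := hmeet T0 hT0
    rw [Finset.mem_inter] at hu
    have hcommon : ∀ T ∈ 𝒜, u ∈ T := by
      intro T hT
      obtain ⟨z, hz⟩ := hmeet T hT
      rw [Finset.mem_inter] at hz
      have : z = u := Finset.card_le_one.mp (by omega) z hz.2 u hu.2
      exact this ▸ hz.1
    have := star_bound (Finset.Icc 1 n \ Finset.Icc 1 5) u 𝒜
      (fun T hT => ⟨(hprops2 T hT).1, (hprops2 T hT).2, hcommon T hT⟩)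
    rw [Gcard hn] at this
    omega

/-- F3: if the complementary trace occurs, the pair trace count is at most `n - 6`. -/
lemma star_trace_bound (n : ℕ) (hn : 9 ≤ n) (F : Finset (Finset ℕ))
    (hFsub : ∀ A ∈ F, A ⊆ Finset.Icc 1 n ∧ A.card = 4)
    (hint : ∀ A ∈ F, ∀ A' ∈ F, (A ∩ A').Nonempty)
    (P : Finset ℕ) (hP : P ⊆ Finset.Icc 1 5) (hPcard : P.card = 2)
    (hQpos : 0 < (F.filter (fun A => A ∩ Finset.Icc 1 5 = Finset.Icc 1 5 \ P)).card) :
    (F.filter (fun A => A ∩ Finset.Icc 1 5 = P)).card ≤ n - 6 := by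
  obtain ⟨𝒜, hcardA, hpropsA, hmemA⟩ := tail_family n F hFsub P
  obtain ⟨𝒞, hcardC, hpropsC, hmemC⟩ := tail_family n F hFsub (Finset.Icc 1 5 \ P)
  have hQcard : (Finset.Icc 1 5 \ P).card = 3 := by
    rw [Finset.card_sdiff_of_subset hP, hPcard]
    simp [Nat.card_Icc]
  obtain ⟨s0, hs0⟩ := Finset.card_pos.mp (by omega : 0 < 𝒞.card)
  obtain ⟨C0, hC0F, htrC0, hs0e⟩ := hmemC s0 hs0
  obtain ⟨u, hue⟩ := Finset.card_eq_one.mp (by rw [(hpropsC s0 hs0).2, hQcard])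
  have huG : u ∈ Finset.Icc 1 n \ Finset.Icc 1 5 := (hpropsC s0 hs0).1 (by rw [hue]; simp)
  rw [← hcardA]
  have hstar : ∀ T ∈ 𝒜, u ∈ T := by
    intro T hT
    obtain ⟨A, hAF, htrA, rfl⟩ := hmemA T hT
    have := cross_tails F hint P (Finset.Icc 1 5 \ P)
      (Finset.inter_sdiff_self _ _) A C0 hAF hC0F htrA htrC0
    obtain ⟨z, hz⟩ := this
    rw [hs0e, hue, Finset.mem_inter, Finset.mem_singleton] at hz
    exact hz.2 ▸ hz.1
  have := star_bound (Finset.Icc 1 n \ Finset.Icc 1 5) u 𝒜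
    (fun T hT => ⟨(hpropsA T hT).1, by rw [(hpropsA T hT).2, hPcard], hstar T hT⟩)
  rw [Gcard hn] at this
  omega

/-- F4: if the pair trace occurs, the complementary trace count is at most 2. -/
lemma two_bound (n : ℕ) (hn : 9 ≤ n) (F : Finset (Finset ℕ))
    (hFsub : ∀ A ∈ F, A ⊆ Finset.Icc 1 n ∧ A.card = 4)
    (hint : ∀ A ∈ F, ∀ A' ∈ F, (A ∩ A').Nonempty)
    (P : Finset ℕ) (hP : P ⊆ Finset.Icc 1 5) (hPcard : P.card = 2)
    (hPpos : 0 < (F.filter (fun A => A ∩ Finset.Icc 1 5 = P)).card) :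
    (F.filter (fun A => A ∩ Finset.Icc 1 5 = Finset.Icc 1 5 \ P)).card ≤ 2 := by
  obtain ⟨𝒜, hcardA, hpropsA, hmemA⟩ := tail_family n F hFsub P
  obtain ⟨𝒞, hcardC, hpropsC, hmemC⟩ := tail_family n F hFsub (Finset.Icc 1 5 \ P)
  have hQcard : (Finset.Icc 1 5 \ P).card = 3 := by
    rw [Finset.card_sdiff_of_subset hP, hPcard]; simp [Nat.card_Icc]
  obtain ⟨T0, hT0⟩ := Finset.card_pos.mp (by omega : 0 < 𝒜.card)
  obtain ⟨A0, hA0F, htrA0, hT0e⟩ := hmemA T0 hT0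
  rw [← hcardC]
  have hsub : ∀ s ∈ 𝒞, s ⊆ T0 ∧ s.card = 1 := by
    intro s hs
    obtain ⟨C, hCF, htrC, hse⟩ := hmemC s hs
    have := cross_tails F hint (Finset.Icc 1 5 \ P) P
      (by rw [Finset.inter_comm]; exact Finset.inter_sdiff_self _ _)
      C A0 hCF hA0F htrC htrA0
    obtain ⟨z, hz⟩ := this
    rw [hse, hT0e] at hz
    rw [Finset.mem_inter] at hz
    have hsc : s.card = 1 := by rw [(hpropsC s hs).2, hQcard]
    obtain ⟨w, hwe⟩ := Finset.card_eq_one.mp hsc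
    refine ⟨?_, hsc⟩
    rw [hwe] at hz ⊢
    rw [Finset.mem_singleton] at hz
    intro y hy
    rw [Finset.mem_singleton] at hy
    subst hy
    rw [← hz.1]
    exact hz.2
  have := singles_bound T0 𝒞 hsub
  have hT0c : T0.card = 2 := by rw [(hpropsA T0 hT0).2, hPcard]
  omega

/-- F5: if the complementary trace occurs twice, the pair trace count is at most 1. -/
lemma one_bound (n : ℕ) (hn : 9 ≤ n) (F : Finset (Finset ℕ))
    (hFsub : ∀ A ∈ F, A ⊆ Finset.Icc 1 n ∧ A.card = 4)
    (hint : ∀ A ∈ F, ∀ A' ∈ F, (A ∩ A').Nonempty)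
    (P : Finset ℕ) (hP : P ⊆ Finset.Icc 1 5) (hPcard : P.card = 2)
    (hQ2 : 2 ≤ (F.filter (fun A => A ∩ Finset.Icc 1 5 = Finset.Icc 1 5 \ P)).card) :
    (F.filter (fun A => A ∩ Finset.Icc 1 5 = P)).card ≤ 1 := by
  obtain ⟨𝒜, hcardA, hpropsA, hmemA⟩ := tail_family n F hFsub P
  obtain ⟨𝒞, hcardC, hpropsC, hmemC⟩ := tail_family n F hFsub (Finset.Icc 1 5 \ P)
  have hQcard : (Finset.Icc 1 5 \ P).card = 3 := by
    rw [Finset.card_sdiff_of_subset hP, hPcard]; simp [Nat.card_Icc]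
  obtain ⟨s1, hs1, s2, hs2, hsne⟩ := Finset.one_lt_card.mp (by omega : 1 < 𝒞.card)
  obtain ⟨u1, hu1e⟩ := Finset.card_eq_one.mp (by rw [(hpropsC s1 hs1).2, hQcard])
  obtain ⟨u2, hu2e⟩ := Finset.card_eq_one.mp (by rw [(hpropsC s2 hs2).2, hQcard])
  have hune : u1 ≠ u2 := by
    intro h; apply hsne; rw [hu1e, hu2e, h]
  have hall : ∀ T ∈ 𝒜, T = {u1, u2} := by
    intro T hT
    obtain ⟨A, hAF, htrA, rfl⟩ := hmemA T hT
    have hmeets : ∀ s ∈ 𝒞, ∀ u : ℕ, s = {u} → u ∈ A \ Finset.Icc 1 5 := by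
      intro s hs u hse
      obtain ⟨C, hCF, htrC, hse'⟩ := hmemC s hs
      have := cross_tails F hint P (Finset.Icc 1 5 \ P)
        (Finset.inter_sdiff_self _ _) A C hAF hCF htrA htrC
      obtain ⟨z, hz⟩ := this
      rw [hse', hse, Finset.mem_inter, Finset.mem_singleton] at hz
      exact hz.2 ▸ hz.1
    have h1 := hmeets s1 hs1 u1 hu1e
    have h2 := hmeets s2 hs2 u2 hu2e
    have hss : ({u1, u2} : Finset ℕ) ⊆ A \ Finset.Icc 1 5 := by
      intro z hz
      rcases Finset.mem_insert.mp hz with rfl | hz'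
      · exact h1
      · exact (Finset.mem_singleton.mp hz') ▸ h2
    refine (Finset.eq_of_subset_of_card_le hss ?_).symm
    rw [Finset.card_pair hune, (hpropsA _ hT).2, hPcard]
  rw [← hcardA]
  apply Finset.card_le_one.mpr
  intro a ha b hb
  rw [hall a ha, hall b hb]

/-- F6: structural dichotomy for two disjoint pair traces. -/
lemma six_bound (n : ℕ) (hn : 9 ≤ n) (F : Finset (Finset ℕ))
    (hFsub : ∀ A ∈ F, A ⊆ Finset.Icc 1 n ∧ A.card = 4)
    (hint : ∀ A ∈ F, ∀ A' ∈ F, (A ∩ A').Nonempty)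
    (P P' : Finset ℕ) (hP : P ⊆ Finset.Icc 1 5) (hP' : P' ⊆ Finset.Icc 1 5)
    (hPcard : P.card = 2) (hP'card : P'.card = 2) (hdisj : P ∩ P' = ∅)
    (h3 : 3 ≤ (F.filter (fun A => A ∩ Finset.Icc 1 5 = P)).card) :
    (F.filter (fun A => A ∩ Finset.Icc 1 5 = P')).card ≤ 4 ∨
      ((F.filter (fun A => A ∩ Finset.Icc 1 5 = P')).card ≤ n - 6 ∧
        ((F.filter (fun A => A ∩ Finset.Icc 1 5 = P')).card ≤ 2 ∨
          (F.filter (fun A => A ∩ Finset.Icc 1 5 = P)).card ≤ n - 6)) := by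
  obtain ⟨𝒜, hcardA, hpropsA, hmemA⟩ := tail_family n F hFsub P
  obtain ⟨ℬ, hcardB, hpropsB, hmemB⟩ := tail_family n F hFsub P'
  have hcross : ∀ T ∈ 𝒜, ∀ S ∈ ℬ, (T ∩ S).Nonempty := by
    intro T hT S hS
    obtain ⟨A, hAF, htrA, rfl⟩ := hmemA T hT
    obtain ⟨B, hBF, htrB, rfl⟩ := hmemB S hS
    exact cross_tails F hint P P' hdisj A B hAF hBF htrA htrB
  have := cross_bound (Finset.Icc 1 n \ Finset.Icc 1 5) 𝒜 ℬ
    (fun T hT => ⟨(hpropsA T hT).1, by rw [(hpropsA T hT).2, hPcard]⟩)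
    (fun S hS => ⟨(hpropsB S hS).1, by rw [(hpropsB S hS).2, hP'card]⟩)
    hcross (by omega)
  rw [Gcard hn] at this
  rw [← hcardA, ← hcardB]
  omega
/-- For an intersecting family `F ⊆ ([n] choose 4)` with `τ(F) ≥ 3`, `n ≥ 9`, and
`|F ∩ [5]| ≥ 2` for all `F ∈ F`: for disjoint 2-subsets `P, P' ⊆ [5]`,
`f_P + f_{P'} + f_{[5]\P} + f_{[5]\P'} ≤ 3(n-6)`, with equality only if
`{f_P, f_{P'}} = {0, 2n-13}`. -/
theorem k4_four_terms_bound
    (n : ℕ) (hn : 9 ≤ n) (F : Finset (Finset ℕ))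
    (hFsub : ∀ A ∈ F, A ⊆ Finset.Icc 1 n ∧ A.card = 4)
    (hint : ∀ A ∈ F, ∀ A' ∈ F, (A ∩ A').Nonempty)
    (hτ : ∀ S ⊆ Finset.Icc 1 n, S.card ≤ 2 → ∃ A ∈ F, S ∩ A = ∅)
    (hU2 : ∀ A ∈ F, 2 ≤ (A ∩ Finset.Icc 1 5).card)
    (P P' : Finset ℕ) (hP : P ⊆ Finset.Icc 1 5) (hP' : P' ⊆ Finset.Icc 1 5)
    (hPcard : P.card = 2) (hP'card : P'.card = 2) (hdisj : P ∩ P' = ∅)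
    (fP fP' fQ fQ' : ℕ)
    (hfP : fP = (F.filter (fun A => A ∩ Finset.Icc 1 5 = P)).card)
    (hfP' : fP' = (F.filter (fun A => A ∩ Finset.Icc 1 5 = P')).card)
    (hfQ : fQ = (F.filter (fun A => A ∩ Finset.Icc 1 5 = Finset.Icc 1 5 \ P)).card)
    (hfQ' : fQ' = (F.filter (fun A => A ∩ Finset.Icc 1 5 = Finset.Icc 1 5 \ P')).card) :
    fP + fP' + fQ + fQ' ≤ 3 * (n - 6) ∧
      (fP + fP' + fQ + fQ' = 3 * (n - 6) →
        (fP = 0 ∧ fP' = 2 * n - 13) ∨ (fP' = 0 ∧ fP = 2 * n - 13)) := by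
  have hdisj' : P' ∩ P = ∅ := by rw [Finset.inter_comm]; exact hdisj
  have hQc : (Finset.Icc 1 5 \ P).card = 3 := by
    rw [Finset.card_sdiff_of_subset hP, hPcard]; simp [Nat.card_Icc]
  have hQ'c : (Finset.Icc 1 5 \ P').card = 3 := by
    rw [Finset.card_sdiff_of_subset hP', hP'card]; simp [Nat.card_Icc]
  have hF1 : fQ ≤ n - 5 := by
    rw [hfQ]; exact triple_bound n hn F hFsub _ hQc
  have hF1' : fQ' ≤ n - 5 := by
    rw [hfQ']; exact triple_bound n hn F hFsub _ hQ'c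
  have hF2 : fP ≤ 2 * n - 13 := by
    rw [hfP]; exact pair_bound n hn F hFsub hint hτ hU2 P hP hPcard
  have hF2' : fP' ≤ 2 * n - 13 := by
    rw [hfP']; exact pair_bound n hn F hFsub hint hτ hU2 P' hP' hP'card
  have hF3 : fQ = 0 ∨ fP ≤ n - 6 := by
    rcases Nat.eq_zero_or_pos fQ with h | h
    · exact Or.inl h
    · right; rw [hfP]
      exact star_trace_bound n hn F hFsub hint P hP hPcard (hfQ ▸ h)
  have hF3' : fQ' = 0 ∨ fP' ≤ n - 6 := by
    rcases Nat.eq_zero_or_pos fQ' with h | h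
    · exact Or.inl h
    · right; rw [hfP']
      exact star_trace_bound n hn F hFsub hint P' hP' hP'card (hfQ' ▸ h)
  have hF4 : fP = 0 ∨ fQ ≤ 2 := by
    rcases Nat.eq_zero_or_pos fP with h | h
    · exact Or.inl h
    · right; rw [hfQ]
      exact two_bound n hn F hFsub hint P hP hPcard (hfP ▸ h)
  have hF4' : fP' = 0 ∨ fQ' ≤ 2 := by
    rcases Nat.eq_zero_or_pos fP' with h | h
    · exact Or.inl h
    · right; rw [hfQ']
      exact two_bound n hn F hFsub hint P' hP' hP'card (hfP' ▸ h)
  have hF5 : fQ ≤ 1 ∨ fP ≤ 1 := by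
    by_cases h : 2 ≤ fQ
    · right; rw [hfP]
      exact one_bound n hn F hFsub hint P hP hPcard (hfQ ▸ h)
    · left; omega
  have hF5' : fQ' ≤ 1 ∨ fP' ≤ 1 := by
    by_cases h : 2 ≤ fQ'
    · right; rw [hfP']
      exact one_bound n hn F hFsub hint P' hP' hP'card (hfQ' ▸ h)
    · left; omega
  have hF6 : fP ≤ 2 ∨ fP' ≤ 4 ∨ (fP' ≤ n - 6 ∧ (fP' ≤ 2 ∨ fP ≤ n - 6)) := by
    by_cases h : 3 ≤ fP
    · have h6 := six_bound n hn F hFsub hint P P' hP hP' hPcard hP'card hdisj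
        (by rw [← hfP]; exact h)
      omega
    · left; omega
  have hF6' : fP' ≤ 2 ∨ fP ≤ 4 ∨ (fP ≤ n - 6 ∧ (fP ≤ 2 ∨ fP' ≤ n - 6)) := by
    by_cases h : 3 ≤ fP'
    · have h6 := six_bound n hn F hFsub hint P' P hP' hP hP'card hPcard hdisj'
        (by rw [← hfP']; exact h)
      omega
    · left; omega
  clear hfP hfP' hfQ hfQ' hτ hU2 hint hFsub hdisj hdisj' hP hP' hQc hQ'c hPcard hP'card F P P'
  constructor
  · omega
  · intro heq; omega
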